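/- Let Z₁ be a random variable on a finite set 𝒵₁, Z₂ uniformly distributed on a finite set 𝒵₂ independent of Z₁ (i.e., the conditional distribution of Z₂ given Z₁ is uniform), and let Y be a real-valued random variable with conditional densities p_{Y|Z₁,Z₂}. Define for s ∈ [0,1) the quantity E_s(Y; Z) := ∫ ( Σ_z P_Z(z) p_{Y|Z}(y|z)^{1/(1-s)} )^{1-s} dy. Then E_s(Y; (Z₁,Z₂)) ≤ |𝒵₂|^s · E_s(Y; Z₁), where p_{Y|Z₁}(y|z₁) = Σ_{z₂} P_{Z₂|Z₁}(z₂|z₁) p_{Y|Z₁,Z₂}(y|z₁,z₂). -/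

import Mathlib

open MeasureTheory ENNReal

private lemma sum_rpow_le_rpow_sum' {ι : Type*} (t : Finset ι) (f : ι → ℝ≥0∞) {q : ℝ}
    (hq : 1 ≤ q) : ∑ i ∈ t, f i ^ q ≤ (∑ i ∈ t, f i) ^ q := by
  classical
  induction t using Finset.induction with
  | empty => simp [ENNReal.zero_rpow_of_pos (lt_of_lt_of_le one_pos hq)]
  | insert _ _ hi ih =>
    rw [Finset.sum_insert hi, Finset.sum_insert hi]
    calc _ ≤ f _ ^ q + (∑ i ∈ _, f i) ^ q := add_le_add_right ih _
    _ ≤ _ := ENNReal.add_rpow_le_rpow_add _ _ hq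

private lemma mul_rpow' {a x : ℝ≥0∞} {r : ℝ} (ha : a ≠ 0) (ha' : a ≠ ⊤) (hr : 0 < r) :
    (a * x) ^ r = a ^ r * x ^ r := by
  rcases eq_or_ne x ⊤ with rfl | hx
  · rw [ENNReal.mul_top ha, ENNReal.top_rpow_of_pos hr, ENNReal.mul_top]
    simp [ENNReal.rpow_eq_zero_iff, ha, ha']
  · exact ENNReal.mul_rpow_of_ne_top ha' hx r

/-- Lemma LOE: if `Z₂` is uniform on a finite set `𝒵₂` and (conditionally on `Z₁`)
independent of `Z₁`, then `E_s(Y;(Z₁,Z₂)) ≤ |𝒵₂|^s ⬝ E_s(Y;Z₁)`, where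
`E_s(Y;Z) = ∫ (Σ_z P_Z(z) p_{Y|Z}(y|z)^{1/(1-s)})^{1-s} dy`. -/
theorem stmt2 {Z₁ Z₂ : Type*} [Fintype Z₁] [Fintype Z₂] [Nonempty Z₂]
    (P₁ : Z₁ → ℝ≥0∞) (hP₁ : ∑ z₁, P₁ z₁ = 1)
    (p : Z₁ → Z₂ → ℝ → ℝ≥0∞) (hmeas : ∀ z₁ z₂, Measurable (p z₁ z₂))
    (s : ℝ) (hs0 : 0 ≤ s) (hs1 : s < 1) :
    (∫⁻ y : ℝ, (∑ z₁, ∑ z₂, P₁ z₁ * (Fintype.card Z₂ : ℝ≥0∞)⁻¹ *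
        (p z₁ z₂ y) ^ (1 / (1 - s))) ^ (1 - s))
      ≤ (Fintype.card Z₂ : ℝ≥0∞) ^ s *
        ∫⁻ y : ℝ, (∑ z₁, P₁ z₁ *
          (∑ z₂, (Fintype.card Z₂ : ℝ≥0∞)⁻¹ * p z₁ z₂ y) ^ (1 / (1 - s))) ^ (1 - s) := by
  set N : ℝ≥0∞ := (Fintype.card Z₂ : ℝ≥0∞) with hN
  have hs : 0 < 1 - s := by linarith
  have hα : (1:ℝ) ≤ 1 / (1 - s) := by
    rw [le_div_iff₀ hs]; linarith
  have hα0 : (0:ℝ) < 1 / (1 - s) := lt_of_lt_of_le one_pos hα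
  have hN0 : N ≠ 0 := by simp [hN, Fintype.card_ne_zero]
  have hNtop : N ≠ ⊤ := by simp [hN]
  have hNs0 : N ^ (s / (1 - s)) ≠ 0 := by
    simp [ENNReal.rpow_eq_zero_iff, hN0, hNtop]
  have hNstop : N ^ (s / (1 - s)) ≠ ⊤ := by
    simp [ENNReal.rpow_eq_top_iff, hN0, hNtop]
  rw [← lintegral_const_mul' _ _ (ENNReal.rpow_ne_top_of_nonneg hs0 hNtop)]
  refine lintegral_mono fun y => ?_
  have key : ∀ x : ℝ≥0∞, N ^ s * x ^ (1 - s) = (N ^ (s / (1 - s)) * x) ^ (1 - s) := by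
    intro x
    rw [mul_rpow' hNs0 hNstop hs, ← ENNReal.rpow_mul, div_mul_cancel₀ _ hs.ne']
  rw [key]
  refine ENNReal.rpow_le_rpow ?_ hs.le
  rw [Finset.mul_sum]
  refine Finset.sum_le_sum fun z₁ _ => ?_
  have step1 : ∑ z₂, P₁ z₁ * N⁻¹ * p z₁ z₂ y ^ (1 / (1 - s))
      ≤ P₁ z₁ * N⁻¹ * (∑ z₂, p z₁ z₂ y) ^ (1 / (1 - s)) := by
    rw [← Finset.mul_sum]
    exact mul_le_mul_right (sum_rpow_le_rpow_sum' _ _ hα) _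
  refine step1.trans (le_of_eq ?_)
  have hinv : (∑ z₂, N⁻¹ * p z₁ z₂ y) = N⁻¹ * ∑ z₂, p z₁ z₂ y := by
    rw [Finset.mul_sum]
  rw [hinv, mul_rpow' (by simp [hNtop]) (by simp [hN0]) hα0]
  have hNinv : N ^ (s / (1 - s)) * (N⁻¹) ^ (1 / (1 - s)) = N⁻¹ := by
    have hexp : s / (1 - s) + -1 * (1 / (1 - s)) = -1 := by field_simp; ring
    rw [← ENNReal.rpow_neg_one N, ← ENNReal.rpow_mul, ← ENNReal.rpow_add _ _ hN0 hNtop, hexp,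
      ENNReal.rpow_neg_one]
  calc P₁ z₁ * N⁻¹ * (∑ z₂, p z₁ z₂ y) ^ (1 / (1 - s))
      = P₁ z₁ * ((N ^ (s / (1 - s)) * (N⁻¹) ^ (1 / (1 - s))) * (∑ z₂, p z₁ z₂ y) ^ (1 / (1 - s))) := by
        rw [hNinv]; ring
    _ = N ^ (s / (1 - s)) * (P₁ z₁ * ((N⁻¹) ^ (1 / (1 - s)) * (∑ z₂, p z₁ z₂ y) ^ (1 / (1 - s)))) := by
        ring
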